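/- Let Â ∈ ℂ^{m×m}, and set A = [[0, Â],[Âᴴ, 0]] and C = [[0, iI],[−iI, 0]] (both 2m×2m Hermitian). Suppose (μ*, λ*, x*) is a 2D-eigentriplet of (A, C) with λ* ≠ 0 and x* = [x₁; x₂]. Then x₁ᴴx₁ = x₂ᴴx₂ = 1/2 and Im(x₁ᴴx₂) = 0. -/

import Mathlib

open scoped Matrix

/-- Spectral (ℓ²-operator) norm of a square complex matrix. -/
noncomputable def specNorm {n : Type*} [Fintype n] [DecidableEq n]
    (M : Matrix n n ℂ) : ℝ :=
  ‖Matrix.toEuclideanCLM (𝕜 := ℂ) M‖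

/-- Euclidean norm of a complex vector. -/
noncomputable def vecNorm {n : Type*} [Fintype n] (x : n → ℂ) : ℝ :=
  ‖(EuclideanSpace.equiv n ℂ).symm x‖

/-- A Hermitian matrix is indefinite: its quadratic form takes both
positive and negative values. -/
def IsIndefinite {n : Type*} [Fintype n] (M : Matrix n n ℂ) : Prop :=
  (∃ y : n → ℂ, 0 < (star y ⬝ᵥ M.mulVec y).re) ∧
  (∃ z : n → ℂ, (star z ⬝ᵥ M.mulVec z).re < 0)

/-- `(μ, lam, x)` is a 2D-eigentriplet of the pair `(A, C)`:
`(A - μ C) x = lam x`, `xᴴ C x = 0`, `xᴴ x = 1`. -/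
def Is2DEigentriplet {n : Type*} [Fintype n] (A C : Matrix n n ℂ)
    (μ lam : ℝ) (x : n → ℂ) : Prop :=
  (A - (μ : ℂ) • C).mulVec x = (lam : ℂ) • x ∧
  star x ⬝ᵥ C.mulVec x = 0 ∧ star x ⬝ᵥ x = 1

lemma conj_dot_mulVec {m : Type*} [Fintype m] (M : Matrix m m ℂ) (a b : m → ℂ) :
    starRingEnd ℂ (star a ⬝ᵥ M.mulVec b) = star b ⬝ᵥ M.conjTranspose.mulVec a := by
  simp [dotProduct, Matrix.mulVec, Matrix.conjTranspose, map_sum, Finset.mul_sum]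
  rw [Finset.sum_comm]
  apply Finset.sum_congr rfl; intro i _
  apply Finset.sum_congr rfl; intro j _
  ring

/-- for the DTI block pair `A = [[0, Â],[Âᴴ, 0]]`,
`C = [[0, iI],[−iI, 0]]`, any 2D-eigentriplet `(μ*, λ*, [x₁; x₂])` with
`λ* ≠ 0` satisfies `x₁ᴴx₁ = x₂ᴴx₂ = 1/2` and `Im(x₁ᴴx₂) = 0`. -/
theorem stmt10 {m : Type*} [Fintype m] [DecidableEq m]
    (Ah : Matrix m m ℂ) (μ lam : ℝ) (hlam : lam ≠ 0)
    (x₁ x₂ : m → ℂ)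
    (ht : Is2DEigentriplet
      (Matrix.fromBlocks 0 Ah Ah.conjTranspose 0)
      (Matrix.fromBlocks 0 (Complex.I • (1 : Matrix m m ℂ))
        (-(Complex.I) • (1 : Matrix m m ℂ)) 0)
      μ lam (Sum.elim x₁ x₂)) :
    star x₁ ⬝ᵥ x₁ = 1 / 2 ∧ star x₂ ⬝ᵥ x₂ = 1 / 2 ∧
      (star x₁ ⬝ᵥ x₂).im = 0 := by
  obtain ⟨h1, h2, h3⟩ := ht
  set s : ℂ := star x₁ ⬝ᵥ x₂ with hs
  set n₁ : ℂ := star x₁ ⬝ᵥ x₁ with hn₁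
  set n₂ : ℂ := star x₂ ⬝ᵥ x₂ with hn₂
  have hts : star x₂ ⬝ᵥ x₁ = starRingEnd ℂ s := by
    rw [hs, Matrix.star_dotProduct]; simp [RCLike.star_def]
  -- component equations
  have E1 : Ah.mulVec x₂ - ((μ : ℂ) * Complex.I) • x₂ = (lam : ℂ) • x₁ := by
    funext i
    have := congrFun h1 (Sum.inl i)
    simp [Matrix.sub_mulVec, Matrix.fromBlocks_mulVec, Matrix.smul_mulVec,
      Matrix.one_mulVec, Matrix.zero_mulVec, smul_eq_mul] at this
    simpa [mul_assoc, mul_comm, mul_left_comm] using this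
  have E2 : Ah.conjTranspose.mulVec x₁ + ((μ : ℂ) * Complex.I) • x₁ = (lam : ℂ) • x₂ := by
    funext i
    have := congrFun h1 (Sum.inr i)
    simp [Matrix.sub_mulVec, Matrix.fromBlocks_mulVec, Matrix.smul_mulVec,
      Matrix.neg_mulVec, Matrix.one_mulVec, Matrix.zero_mulVec, smul_eq_mul] at this
    simp only [Pi.add_apply, Pi.smul_apply, smul_eq_mul]
    linear_combination this
  -- dot product equations
  have d1 : star x₁ ⬝ᵥ Ah.mulVec x₂ - ((μ : ℂ) * Complex.I) * s = (lam : ℂ) * n₁ := by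
    have := congrArg (fun v => star x₁ ⬝ᵥ v) E1
    simpa [dotProduct_sub, dotProduct_smul, smul_eq_mul] using this
  have d2 : star x₂ ⬝ᵥ Ah.conjTranspose.mulVec x₁ + ((μ : ℂ) * Complex.I) * (starRingEnd ℂ s)
      = (lam : ℂ) * n₂ := by
    have := congrArg (fun v => star x₂ ⬝ᵥ v) E2
    simpa [dotProduct_add, dotProduct_smul, smul_eq_mul, hts] using this
  -- constraint: Im s = 0
  have hIm : s.im = 0 := by
    have := h2
    rw [Matrix.fromBlocks_mulVec] at this
    simp only [Matrix.zero_mulVec, Matrix.smul_mulVec, Matrix.neg_mulVec,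
      Matrix.one_mulVec, Sum.elim_comp_inl, Sum.elim_comp_inr,
      add_zero, zero_add, neg_smul, Function.star_sumElim,
      sumElim_dotProduct_sumElim, dotProduct_neg,
      dotProduct_smul, smul_eq_mul] at this
    rw [hts] at this
    rw [← hs] at this
    have h4 : Complex.I * (s - starRingEnd ℂ s) = 0 := by
      rw [mul_sub]; linear_combination this
    have h5 : s - starRingEnd ℂ s = 0 := by
      rcases mul_eq_zero.mp h4 with h | h
      · exact absurd h Complex.I_ne_zero
      · exact h
    have := congrArg Complex.im h5
    simpa using this
  -- conjugate d2
  have hcd2 := congrArg (starRingEnd ℂ) d2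
  rw [map_add, map_mul, map_mul, map_mul, conj_dot_mulVec,
    Matrix.conjTranspose_conjTranspose] at hcd2
  have hsr : starRingEnd ℂ s = s := Complex.conj_eq_iff_im.mpr hIm
  have hn2r : starRingEnd ℂ n₂ = n₂ := by
    rw [hn₂, starRingEnd_apply]; exact (Matrix.star_dotProduct x₂ x₂).symm
  rw [hsr, hsr, hn2r, Complex.conj_ofReal, Complex.conj_ofReal, Complex.conj_I] at hcd2
  -- hcd2 : star x₁ ⬝ᵥ Ah *ᵥ x₂ + ↑μ * -I * s = ↑lam * n₂
  have heq : (lam : ℂ) * n₁ = (lam : ℂ) * n₂ := by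
    rw [← d1, ← hcd2]; ring
  have hlamC : (lam : ℂ) ≠ 0 := Complex.ofReal_ne_zero.mpr hlam
  have hne : n₁ = n₂ := mul_left_cancel₀ hlamC heq
  have hsum : n₁ + n₂ = 1 := by
    rw [hn₁, hn₂, ← sumElim_dotProduct_sumElim, ← Function.star_sumElim, h3]
  have h1' : n₁ = 1 / 2 := by linear_combination hsum / 2 + hne / 2
  have h2' : n₂ = 1 / 2 := by rw [← hne]; exact h1'
  exact ⟨h1', h2', hIm⟩
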